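/- For every y ∈ ℓ∞, every m ∈ ℕ, and every operator A in the convex hull of {σ_n : 1 ≤ n ≤ m}, setting s = (I−T)y, one has |Σ_{i=k+1}^{k+r} (A s)_i| ≤ 2m‖y‖_{ℓ∞} for all k ≥ 0 and r ≥ 1. In particular, for each fixed n with 1 ≤ n ≤ m, |Σ_{i=k+1}^{k+r} (σ_n s)_i| ≤ 2n‖y‖_{ℓ∞}. -/

import Mathlib

open Filter BoundedContinuousFunction

noncomputable section

/-- `ℓ∞`: the space of bounded real sequences (indexed from `0`). -/
abbrev LInf : Type := BoundedContinuousFunction ℕ ℝ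

/-- The translation (shift) operator `T(x₁,x₂,…) = (0,x₁,x₂,…)` (0-indexed). -/
def shift (x : LInf) : LInf :=
  BoundedContinuousFunction.ofNormedAddCommGroup
    (fun n => if n = 0 then 0 else x (n - 1)) continuous_of_discreteTopology ‖x‖
    (by
      intro n
      rcases n with _ | n
      · simp [norm_nonneg x]
      · simpa using x.norm_coe_le_norm n)

/-- The dilation operator `σ_m`, repeating each entry `m` times
(0-indexed: `(σ_m x)ₙ = x_{⌊n/m⌋}`, i.e. `(σ_m x)ₙ = x_{⌈n/m⌉}` in 1-indexed notation). -/
def dil (m : ℕ) (x : LInf) : LInf :=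
  x.compContinuous ⟨fun n => n / m, continuous_of_discreteTopology⟩

/-- The dilation operator `σ_m` as a bounded linear operator on `ℓ∞`. -/
def dilOp (m : ℕ) : LInf →L[ℝ] LInf :=
  LinearMap.mkContinuous
    { toFun := dil m
      map_add' := fun x y => by ext n; simp [dil]
      map_smul' := fun c x => by ext n; simp [dil] }
    1
    (fun x => by
      rw [one_mul]
      exact x.norm_compContinuous_le _)

lemma dilOp_apply (n : ℕ) (x : LInf) (i : ℕ) : (dilOp n x) i = x (i / n) := rfl

lemma shift_apply (x : LInf) (j : ℕ) :
    shift x j = if j = 0 then 0 else x (j - 1) := rfl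

/-- Key pointwise lemma. -/
lemma dil_shift_pointwise (y : LInf) (n : ℕ) (hn : 1 ≤ n) (i : ℕ) :
    (dilOp n (y - shift y)) i
      = y (i / n) - (if i < n then 0 else y ((i - n) / n)) := by
  rw [dilOp_apply]
  simp only [BoundedContinuousFunction.coe_sub, Pi.sub_apply]
  congr 1
  rw [shift_apply]
  by_cases h : i < n
  · rw [if_pos (Nat.div_eq_of_lt h), if_pos h]
  · push_neg at h
    have hdiv : 1 ≤ i / n := (Nat.one_le_div_iff hn).mpr h
    rw [if_neg (by omega), if_neg (by omega)]
    congr 1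
    have h1 : (i - n) + n = i := by omega
    have h2 : ((i - n) + n) / n = (i - n) / n + 1 := Nat.add_div_right _ hn
    rw [h1] at h2
    omega

lemma key_bound (y : LInf) (n : ℕ) (hn : 1 ≤ n) (k r : ℕ) :
    |∑ i ∈ Finset.Ico k (k + r), (dilOp n (y - shift y)) i| ≤ 2 * n * ‖y‖ := by
  set G : ℕ → ℝ := fun j => y (j / n) with hG
  have hGb : ∀ j, |G j| ≤ ‖y‖ := fun j => by
    simpa [hG, Real.norm_eq_abs] using y.norm_coe_le_norm (j / n)
  set M : ℕ := max k n with hM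
  have hM1 : k ≤ M := le_max_left _ _
  have hM2 : n ≤ M := le_max_right _ _
  have hM3 : M ≤ k + n := by omega
  set a : ℕ := M - n with ha
  set b : ℕ := k + r - n with hb
  set S : Finset ℕ := Finset.Ico k (k + r) with hS
  set T : Finset ℕ := Finset.Ico a b with hT
  have hsum : ∑ i ∈ S, (dilOp n (y - shift y)) i = ∑ i ∈ S, G i - ∑ j ∈ T, G j := by
    rw [Finset.sum_congr rfl (fun i _ => dil_shift_pointwise y n hn i),
      Finset.sum_sub_distrib]
    congr 1
    have step1 : ∑ i ∈ S, (if i < n then (0:ℝ) else G (i - n))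
        = ∑ i ∈ S.filter (fun i => ¬ i < n), G (i - n) := by
      rw [Finset.sum_filter]
      exact Finset.sum_congr rfl fun i _ => by by_cases h : i < n <;> simp [h]
    have step2 : S.filter (fun i => ¬ i < n) = Finset.Ico M (k + r) := by
      ext i
      simp only [hS, Finset.mem_filter, Finset.mem_Ico, not_lt, hM]
      omega
    rw [step1, step2, Finset.sum_Ico_eq_sum_range, hT, Finset.sum_Ico_eq_sum_range]
    have hcard : k + r - M = b - a := by omega
    rw [hcard]
    refine Finset.sum_congr rfl fun i hi => ?_
    simp only [Finset.mem_range] at hi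
    congr 1
    omega
  rw [hsum, ← Finset.sum_sdiff_sub_sum_sdiff]
  have habs : |∑ i ∈ S \ T, G i - ∑ i ∈ T \ S, G i|
      ≤ |∑ i ∈ S \ T, G i| + |∑ i ∈ T \ S, G i| := abs_sub _ _
  have hsub1 : S \ T ⊆ Finset.Ico (max k b) (k + r) := by
    intro i hi
    simp only [hS, hT, Finset.mem_sdiff, Finset.mem_Ico, not_and, not_lt] at hi ⊢
    constructor
    · have hak : a ≤ k := by omega
      rcases le_or_gt b i with h | h
      · omega
      · exact absurd (hi.2 (by omega)) (by omega)
    · exact hi.1.2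
  have hsub2 : T \ S ⊆ Finset.Ico a (min b k) := by
    intro i hi
    simp only [hS, hT, Finset.mem_sdiff, Finset.mem_Ico, not_and, not_lt] at hi ⊢
    refine ⟨hi.1.1, lt_min hi.1.2 ?_⟩
    rcases lt_or_ge i k with h | h
    · exact h
    · exact absurd (hi.2 h) (by omega)
  have hc1 : (S \ T).card ≤ n := by
    calc (S \ T).card ≤ (Finset.Ico (max k b) (k + r)).card := Finset.card_le_card hsub1
      _ = (k + r) - max k b := Nat.card_Ico _ _
      _ ≤ n := by have := le_max_right k b; have := le_max_left k b; omega
  have hc2 : (T \ S).card ≤ n := by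
    calc (T \ S).card ≤ (Finset.Ico a (min b k)).card := Finset.card_le_card hsub2
      _ = min b k - a := Nat.card_Ico _ _
      _ ≤ n := by have := min_le_right b k; omega
  have hbound : ∀ (U : Finset ℕ), U.card ≤ n → |∑ i ∈ U, G i| ≤ (n : ℝ) * ‖y‖ := by
    intro U hU
    calc |∑ i ∈ U, G i| ≤ ∑ i ∈ U, |G i| := Finset.abs_sum_le_sum_abs _ _
      _ ≤ U.card • ‖y‖ := Finset.sum_le_card_nsmul _ _ _ fun i _ => hGb i
      _ = (U.card : ℝ) * ‖y‖ := by rw [nsmul_eq_mul]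
      _ ≤ (n : ℝ) * ‖y‖ := by
          apply mul_le_mul_of_nonneg_right _ (norm_nonneg y)
          exact_mod_cast hU
  calc |∑ i ∈ S \ T, G i - ∑ i ∈ T \ S, G i|
      ≤ |∑ i ∈ S \ T, G i| + |∑ i ∈ T \ S, G i| := habs
    _ ≤ (n : ℝ) * ‖y‖ + (n : ℝ) * ‖y‖ := add_le_add (hbound _ hc1) (hbound _ hc2)
    _ = 2 * n * ‖y‖ := by ring

/-- For `s = (I - T)y` and `A` in the convex hull of `{σ_n : 1 ≤ n ≤ m}`, the sum of any `r`
consecutive entries of `As` is at most `2m‖y‖_∞` in absolute value; in particular, for each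
fixed `n` with `1 ≤ n ≤ m`, the sum of any `r` consecutive entries of `σ_n s` is at most
`2n‖y‖_∞` in absolute value. -/
theorem abs_sum_dilation_shift_difference_le (y : LInf) (m : ℕ) (hm : 1 ≤ m) :
    (∀ A ∈ convexHull ℝ {S : LInf →L[ℝ] LInf | ∃ n : ℕ, 1 ≤ n ∧ n ≤ m ∧ S = dilOp n},
      ∀ k r : ℕ, 1 ≤ r →
        |∑ i ∈ Finset.Ico k (k + r), (A (y - shift y)) i| ≤ 2 * m * ‖y‖) ∧
    ∀ n : ℕ, 1 ≤ n → n ≤ m → ∀ k r : ℕ, 1 ≤ r →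
      |∑ i ∈ Finset.Ico k (k + r), (dilOp n (y - shift y)) i| ≤ 2 * n * ‖y‖ := by
  have hy : (0:ℝ) ≤ ‖y‖ := norm_nonneg y
  set C : Set (LInf →L[ℝ] LInf) :=
    {A | ∀ k r : ℕ, 1 ≤ r →
      |∑ i ∈ Finset.Ico k (k + r), (A (y - shift y)) i| ≤ 2 * m * ‖y‖} with hC
  have base : {S : LInf →L[ℝ] LInf | ∃ n : ℕ, 1 ≤ n ∧ n ≤ m ∧ S = dilOp n} ⊆ C := by
    rintro A ⟨n, hn1, hn2, rfl⟩ k r hr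
    calc |∑ i ∈ Finset.Ico k (k + r), (dilOp n (y - shift y)) i|
        ≤ 2 * n * ‖y‖ := key_bound y n hn1 k r
      _ ≤ 2 * m * ‖y‖ := by
          apply mul_le_mul_of_nonneg_right _ hy
          have : (n : ℝ) ≤ (m : ℝ) := by exact_mod_cast hn2
          linarith
  have hconv : Convex ℝ C := by
    intro A hA B hB a b ha hb hab
    intro k r hr
    have hAB : ∀ i, ((a • A + b • B) (y - shift y)) i
        = a * (A (y - shift y)) i + b * (B (y - shift y)) i := by
      intro i; simp
    rw [Finset.sum_congr rfl fun i _ => hAB i, Finset.sum_add_distrib,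
      ← Finset.mul_sum, ← Finset.mul_sum]
    calc |a * ∑ i ∈ Finset.Ico k (k + r), (A (y - shift y)) i
          + b * ∑ i ∈ Finset.Ico k (k + r), (B (y - shift y)) i|
        ≤ |a * ∑ i ∈ Finset.Ico k (k + r), (A (y - shift y)) i|
          + |b * ∑ i ∈ Finset.Ico k (k + r), (B (y - shift y)) i| := abs_add_le _ _
      _ = a * |∑ i ∈ Finset.Ico k (k + r), (A (y - shift y)) i|
          + b * |∑ i ∈ Finset.Ico k (k + r), (B (y - shift y)) i| := by
          rw [abs_mul, abs_mul, abs_of_nonneg ha, abs_of_nonneg hb]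
      _ ≤ a * (2 * m * ‖y‖) + b * (2 * m * ‖y‖) := by
          exact add_le_add (mul_le_mul_of_nonneg_left (hA k r hr) ha)
            (mul_le_mul_of_nonneg_left (hB k r hr) hb)
      _ = 2 * m * ‖y‖ := by rw [← add_mul, hab, one_mul]
  exact ⟨fun A hA => convexHull_min base hconv hA,
    fun n hn1 _ k r _ => key_bound y n hn1 k r⟩

end
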